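/- In the queueing construction, for all integers M ≥ 2 and all 1 ≤ j ≤ M−1: (a) there is a constant C > 0 depending only on N such that Σ_{(i',μ_{j'}) ≠ (0,μ_j)} |A^0(μ_{j'}|μ_j)·Q^{μ_{j'}}(i'|0)|·g(0,μ_j) ≤ (C/M²)·(1/η(μ_j)); and (b) Σ_{(i',μ_{j'}) ≠ (0,μ_j)} |A^{i'}(μ_j|μ_{j'})·Q^{μ_j}(0|i')|·g(i',μ_{j'}) ≥ |A^1(μ_j|μ_{j−1})·Q^{μ_j}(0|1)|·g(1,μ_{j−1}) = μ_j / (μ_{j−1}·η(μ_{j−1})·(M+1)). -/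

import Mathlib

noncomputable section

/-- `μ_j = 1/2 + j/M`. -/
def μval (M j : ℕ) : ℝ := 1 / 2 + (j : ℝ) / (M : ℝ)

/-- The queueing generator `Q^μ` on `X = {0,…,N}`: `Q^μ(i+1|i) = 1`, `Q^μ(i−1|i) = μ`,
diagonal `−1` at `0`, `−μ` at `N`, `−(1+μ)` in between, other entries `0`;
`Qq N μ i' i = Q^μ(i'|i)`. -/
def Qq (N : ℕ) (μ : ℝ) (i' i : Fin (N + 1)) : ℝ :=
  if i'.val = i.val + 1 then 1
  else if i'.val + 1 = i.val then μ
  else if i' = i then -((if i.val < N then (1 : ℝ) else 0) + (if 0 < i.val then μ else 0))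
  else 0

/-- The upward jump rate of the environment chain `A^i`: `i` for `i ≥ 1`, `1/M²` for `i = 0`. -/
def upRate (M i : ℕ) : ℝ := if i = 0 then ((M : ℝ) ^ 2)⁻¹ else (i : ℝ)

/-- The environment generator `A^i` on `Z = {μ_0,…,μ_M}` (indexed by `j`):
`A^i(μ_{j+1}|μ_j) = upRate M i`, `A^i(μ_{j−1}|μ_j) = 1`, diagonal making row sums zero,
other entries `0`; `Aq M i j' j = A^i(μ_{j'}|μ_j)`. -/
def Aq (M i : ℕ) (j' j : Fin (M + 1)) : ℝ :=
  if j'.val = j.val + 1 then upRate M i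
  else if j'.val + 1 = j.val then 1
  else if j' = j then -((if j.val < M then upRate M i else 0) + (if 0 < j.val then (1 : ℝ) else 0))
  else 0

/-- `η(μ) = Σ_{i=0}^{N} μ^{−i}`. -/
def ηq (N : ℕ) (μ : ℝ) : ℝ := ∑ k ∈ Finset.range (N + 1), μ⁻¹ ^ k

/-- `m^μ(i) = μ^{−i}/η(μ)`. -/
def mq (N : ℕ) (μ : ℝ) (i : Fin (N + 1)) : ℝ := μ⁻¹ ^ i.val / ηq N μ

/-- `σ(i) = Σ_{j=0}^{M} i^j` for `i ≥ 1`, and `σ(0) = Σ_{j=0}^{M} M^{−2j}`. -/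
def σq (M i : ℕ) : ℝ := ∑ j ∈ Finset.range (M + 1), upRate M i ^ j

/-- `ν^i(μ_j) = i^j/σ(i)` for `i ≥ 1`, and `ν^0(μ_j) = M^{−2j}/σ(0)`. -/
def νq (M i : ℕ) (j : Fin (M + 1)) : ℝ := upRate M i ^ j.val / σq M i

/-- The product measure `g(i,μ_j) = m^{μ_j}(i)·ν^i(μ_j)` on the natural space. -/
def gq (N M : ℕ) (p : Fin (N + 1) × Fin (M + 1)) : ℝ :=
  mq N (μval M p.2.val) p.1 * νq M p.1.val p.2

/-- The minimal choice `τ_ε(i,μ)`: the maximum of the two ratios in (12). -/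
def τq (N M : ℕ) (p : Fin (N + 1) × Fin (M + 1)) : ℝ :=
  max
    ((∑ s ∈ Finset.univ.erase p,
        |Aq M s.1.val p.2 s.2 * Qq N (μval M p.2.val) p.1 s.1| * gq N M s) /
      (Aq M p.1.val p.2 p.2 * Qq N (μval M p.2.val) p.1 p.1 * gq N M p))
    ((∑ s ∈ Finset.univ.erase p,
        |Aq M p.1.val s.2 p.2 * Qq N (μval M s.2.val) s.1 p.1|) /
      (Aq M p.1.val p.2 p.2 * Qq N (μval M p.2.val) p.1 p.1))

/-- The natural-space part of the combined generator:
`R_ε(i',μ'|i,μ) = |A^i(μ'|μ)·Q^{μ'}(i'|i)|` off the diagonal and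
`R_ε(i,μ|i,μ) = −τ_ε(i,μ)·|A^i(μ|μ)·Q^μ(i|i)|`; `Rnat N M s p = R_ε(s|p)`. -/
def Rnat (N M : ℕ) (s p : Fin (N + 1) × Fin (M + 1)) : ℝ :=
  if s = p then -τq N M p * |Aq M p.1.val p.2 p.2 * Qq N (μval M p.2.val) p.1 p.1|
  else |Aq M p.1.val s.2 p.2 * Qq N (μval M s.2.val) s.1 p.1|

/-- Rate into the maintenance state: `R_ε(c_i|(i,μ)) = −Σ_{(i',μ')} R_ε(i',μ'|(i,μ))`. -/
def RcIn (N M : ℕ) (p : Fin (N + 1) × Fin (M + 1)) : ℝ :=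
  -∑ s : Fin (N + 1) × Fin (M + 1), Rnat N M s p

/-- Rate out of the maintenance state:
`R_ε((i,μ)|c_i) = −(1/ε)·Σ_{(i',μ')} R_ε((i,μ)|(i',μ'))·g(i',μ')`. -/
def RcOut (N M : ℕ) (ε : ℝ) (p : Fin (N + 1) × Fin (M + 1)) : ℝ :=
  -(1 / ε) * ∑ s : Fin (N + 1) × Fin (M + 1), Rnat N M p s * gq N M s

/-- The recursively defined pair `(V_r^{(j)}, V_c^{(j)})` with `j = N − t` (fuel `t`). -/
def Vrc (N M : ℕ) (ε : ℝ) : ℕ → ℝ × ℝ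
  | 0 =>
      (∑ μ : Fin (M + 1),
          RcIn N M (⟨N, Nat.lt_succ_self N⟩, μ) * gq N M (⟨N, Nat.lt_succ_self N⟩, μ),
        ε * ∑ μ : Fin (M + 1), RcOut N M ε (⟨N, Nat.lt_succ_self N⟩, μ))
  | t + 1 =>
      let v := Vrc N M ε t
      let j : Fin (N + 1) := ⟨N - (t + 1), by omega⟩
      ((∑ μ : Fin (M + 1), RcIn N M (j, μ) * gq N M (j, μ)) + max (v.1 - v.2) 0,
        ε * (∑ μ : Fin (M + 1), RcOut N M ε (j, μ)) + max (v.2 - v.1) 0)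

/-- `(V_r^{(j)}, V_c^{(j)})` for `1 ≤ j ≤ N`. -/
def Vj (N M : ℕ) (ε : ℝ) (j : ℕ) : ℝ × ℝ := Vrc N M ε (N - j)

/-- The combined generator `R_ε` of the multiple-maintenance-state construction on
`Ŷ = (X×Z) ⊕ {c_0,…,c_N}`; `Rhat N M ε s p = R_ε(s|p)`. -/
def Rhat (N M : ℕ) (ε : ℝ) :
    ((Fin (N + 1) × Fin (M + 1)) ⊕ Fin (N + 1)) →
      ((Fin (N + 1) × Fin (M + 1)) ⊕ Fin (N + 1)) → ℝ
  | Sum.inl s, Sum.inl p => Rnat N M s p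
  | Sum.inr a, Sum.inl p => if a = p.1 then RcIn N M p else 0
  | Sum.inl s, Sum.inr a => if a = s.1 then RcOut N M ε s else 0
  | Sum.inr a, Sum.inr b =>
      if a = b then
        if b.val = 0 then
          -((∑ μ : Fin (M + 1), RcOut N M ε (b, μ)) +
              max ((Vj N M ε 1).2 - (Vj N M ε 1).1) 0 / ε)
        else -(max (Vj N M ε b.val).1 (Vj N M ε b.val).2) / ε
      else if a.val = b.val + 1 then
        max ((Vj N M ε (b.val + 1)).2 - (Vj N M ε (b.val + 1)).1) 0 / ε
      else if a.val + 1 = b.val then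
        max ((Vj N M ε b.val).1 - (Vj N M ε b.val).2) 0 / ε
      else 0

/-- The target stationary measure on `Ŷ`: `g` on the natural space, `ε` on each `c_i`. -/
def ghat (N M : ℕ) (ε : ℝ) : ((Fin (N + 1) × Fin (M + 1)) ⊕ Fin (N + 1)) → ℝ :=
  Sum.elim (gq N M) fun _ => ε



section aux

lemma upRate_nonneg (M i : ℕ) : 0 ≤ upRate M i := by
  unfold upRate; split <;> positivity

lemma ηq_pos (N : ℕ) {μ : ℝ} (hμ : 0 < μ) : 0 < ηq N μ := by
  unfold ηq
  refine Finset.sum_pos (fun k _ => by positivity) ⟨0, Finset.mem_range.mpr (Nat.succ_pos N)⟩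

lemma σq_ge_one (M i : ℕ) : 1 ≤ σq M i := by
  have h := Finset.single_le_sum (f := fun k => upRate M i ^ k)
    (fun k _ => pow_nonneg (upRate_nonneg M i) k) (Finset.mem_range.mpr (Nat.succ_pos M))
  simpa [σq] using h

lemma μval_pos (M j : ℕ) : 0 < μval M j := by
  unfold μval
  have : (0:ℝ) ≤ (j:ℝ)/(M:ℝ) := by positivity
  linarith

lemma gq_nonneg (N M : ℕ) (p : Fin (N+1) × Fin (M+1)) : 0 ≤ gq N M p := by
  unfold gq mq νq
  have h1 := ηq_pos N (μval_pos M p.2.val)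
  have h2 := σq_ge_one M p.1.val
  have h3 := upRate_nonneg M p.1.val
  have h4 : 0 ≤ (μval M p.2.val)⁻¹ := le_of_lt (inv_pos.mpr (μval_pos M p.2.val))
  positivity

lemma absQ (N : ℕ) (hN : 1 ≤ N) (μ : ℝ) (i' : Fin (N+1)) :
    |Qq N μ i' (0 : Fin (N+1))| =
      (if i' = (⟨1, Nat.succ_lt_succ hN⟩ : Fin (N+1)) then 1 else 0) +
      (if i' = (⟨0, by omega⟩ : Fin (N+1)) then 1 else 0) := by
  have h0 : ((0 : Fin (N+1)) : ℕ) = 0 := rfl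
  have hNpos : 0 < N := hN
  unfold Qq
  simp only [Fin.ext_iff, h0]
  split_ifs <;> simp_all

lemma sumQ (N : ℕ) (hN : 1 ≤ N) (μ : ℝ) :
    ∑ i' : Fin (N+1), |Qq N μ i' (0 : Fin (N+1))| = 2 := by
  simp only [absQ N hN μ, Finset.sum_add_distrib, Finset.sum_ite_eq', Finset.mem_univ, if_true]
  norm_num

lemma absA (M : ℕ) (hM : 2 ≤ M) (j j' : Fin (M+1)) (h1 : 1 ≤ j.val) (h2 : j.val ≤ M - 1) :
    |Aq M 0 j' j| =
      (if j' = (⟨j.val + 1, by omega⟩ : Fin (M+1)) then ((M:ℝ)^2)⁻¹ else 0) +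
      (if j' = (⟨j.val - 1, by omega⟩ : Fin (M+1)) then 1 else 0) +
      (if j' = j then 1 + ((M:ℝ)^2)⁻¹ else 0) := by
  have hjM : j.val < M := by omega
  have hj0 : 0 < j.val := h1
  have hMpos : (0:ℝ) < (M:ℝ)^2 := by positivity
  have hinv : (0:ℝ) ≤ ((M:ℝ)^2)⁻¹ := by positivity
  have hup : upRate M 0 = ((M:ℝ)^2)⁻¹ := by simp [upRate]
  have hd1 : (j' = (⟨j.val + 1, by omega⟩ : Fin (M+1))) ↔ j'.val = j.val + 1 := by
    simp [Fin.ext_iff]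
  have hd2 : (j' = (⟨j.val - 1, by omega⟩ : Fin (M+1))) ↔ j'.val + 1 = j.val := by
    rw [Fin.ext_iff]
    show j'.val = j.val - 1 ↔ _
    omega
  have hd3 : (j' = j) ↔ j'.val = j.val := Fin.ext_iff
  unfold Aq
  rw [hup]
  simp only [hd1, hd2, hd3, hjM, hj0, if_true]
  have habs : |-((((M:ℝ)^2)⁻¹) + 1)| = 1 + ((M:ℝ)^2)⁻¹ := by
    rw [abs_of_nonpos (by linarith)]; ring
  by_cases e1 : j'.val = j.val + 1
  · have e2 : ¬ (j'.val + 1 = j.val) := by omega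
    have e3 : ¬ (j'.val = j.val) := by omega
    simp [e1, e2, e3, abs_of_nonneg hinv] <;> omega
  · by_cases e2 : j'.val + 1 = j.val
    · have e3 : ¬ (j'.val = j.val) := by omega
      simp [e1, e2, e3] <;> omega
    · by_cases e3 : j'.val = j.val
      · simp [e1, e2, e3]
        rw [abs_of_nonpos (by linarith)]; ring
      · simp [e1, e2, e3]

lemma sumA (M : ℕ) (hM : 2 ≤ M) (j : Fin (M+1)) (h1 : 1 ≤ j.val) (h2 : j.val ≤ M - 1) :
    ∑ j' : Fin (M+1), |Aq M 0 j' j| = 2 * ((M:ℝ)^2)⁻¹ + 2 := by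
  simp only [absA M hM j _ h1 h2, Finset.sum_add_distrib, Finset.sum_ite_eq',
    Finset.mem_univ, if_true]
  ring

end aux

/- STATEMENT 15: for M ≥ 2 and 1 ≤ j ≤ M−1: (a) the outgoing sum at (0,μ_j) is
O(1/M²)·(1/η(μ_j)) with a constant depending only on N; (b) the incoming sum at (0,μ_j)
is bounded below by the single term |A^1(μ_j|μ_{j−1})·Q^{μ_j}(0|1)|·g(1,μ_{j−1}),
which equals μ_j/(μ_{j−1}·η(μ_{j−1})·(M+1)). -/
theorem stmt15 (N : ℕ) (hN : 1 ≤ N) :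
    ∃ C : ℝ, 0 < C ∧ ∀ M : ℕ, 2 ≤ M → ∀ j : Fin (M + 1), 1 ≤ j.val → j.val ≤ M - 1 →
      ((∑ s ∈ Finset.univ.erase ((0 : Fin (N + 1)), j),
          |Aq M 0 s.2 j * Qq N (μval M s.2.val) s.1 (0 : Fin (N + 1))| *
            gq N M ((0 : Fin (N + 1)), j)) ≤
        C / (M : ℝ) ^ 2 * (1 / ηq N (μval M j.val))) ∧
      ((∑ s ∈ Finset.univ.erase ((0 : Fin (N + 1)), j),
          |Aq M s.1.val j s.2 * Qq N (μval M j.val) (0 : Fin (N + 1)) s.1| * gq N M s) ≥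
        |Aq M 1 j ⟨j.val - 1, by have := j.isLt; omega⟩ *
            Qq N (μval M j.val) (0 : Fin (N + 1)) ⟨1, by omega⟩| *
          gq N M (⟨1, by omega⟩, ⟨j.val - 1, by have := j.isLt; omega⟩)) ∧
      (|Aq M 1 j ⟨j.val - 1, by have := j.isLt; omega⟩ *
            Qq N (μval M j.val) (0 : Fin (N + 1)) ⟨1, by omega⟩| *
          gq N M (⟨1, by omega⟩, ⟨j.val - 1, by have := j.isLt; omega⟩) =
        μval M j.val / (μval M (j.val - 1) * ηq N (μval M (j.val - 1)) * ((M : ℝ) + 1))) := by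
  refine ⟨5, by norm_num, fun M hM j hj1 hj2 => ?_⟩
  have hMpos : (0:ℝ) < (M:ℝ) := by positivity
  have hM2 : (0:ℝ) < (M:ℝ)^2 := by positivity
  have hμj := μval_pos M j.val
  have hηj := ηq_pos N hμj
  have h2M : (2:ℝ) ≤ (M:ℝ) := by exact_mod_cast hM
  set jm : Fin (M+1) := ⟨j.val - 1, by have := j.isLt; omega⟩ with hjm
  refine ⟨?_, ?_, ?_⟩
  · -- part (a)
    set g := gq N M ((0 : Fin (N + 1)), j) with hg
    have hgnn : 0 ≤ g := gq_nonneg N M _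
    calc (∑ s ∈ Finset.univ.erase ((0 : Fin (N + 1)), j),
          |Aq M 0 s.2 j * Qq N (μval M s.2.val) s.1 (0 : Fin (N + 1))| * g)
        ≤ ∑ s : Fin (N+1) × Fin (M+1),
            |Aq M 0 s.2 j * Qq N (μval M s.2.val) s.1 (0 : Fin (N + 1))| * g := by
          refine Finset.sum_le_sum_of_subset_of_nonneg (Finset.subset_univ _) ?_
          intro s _ _; positivity
      _ = (2 * ((M:ℝ)^2)⁻¹ + 2) * 2 * g := by
          rw [Fintype.sum_prod_type_right]
          have : ∀ j' : Fin (M+1),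
              (∑ i' : Fin (N+1),
                |Aq M 0 j' j * Qq N (μval M j'.val) i' (0 : Fin (N + 1))| * g)
              = |Aq M 0 j' j| * (2 * g) := by
            intro j'
            simp only [abs_mul, mul_assoc, ← Finset.mul_sum, ← Finset.sum_mul,
              sumQ N hN (μval M j'.val)]
          simp only [this, ← Finset.sum_mul, sumA M hM j hj1 hj2]
          ring
      _ ≤ 5 / (M : ℝ) ^ 2 * (1 / ηq N (μval M j.val)) := by
          have hgle : g ≤ (1 / ηq N (μval M j.val)) * ((M:ℝ)^2)⁻¹ := by
            have h0 : ((0 : Fin (N+1)) : ℕ) = 0 := rfl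
            have hσ := σq_ge_one M 0
            have hσpos : (0:ℝ) < σq M 0 := by linarith
            have hpow : (((M:ℝ)^2)⁻¹) ^ j.val ≤ ((M:ℝ)^2)⁻¹ := by
              refine pow_le_of_le_one (by positivity) ?_ (by omega)
              rw [inv_le_one_iff₀]; right; nlinarith [h2M]
            have hν : νq M 0 j ≤ ((M:ℝ)^2)⁻¹ := by
              unfold νq
              rw [div_le_iff₀ hσpos]
              calc upRate M 0 ^ j.val = (((M:ℝ)^2)⁻¹) ^ j.val := by simp [upRate]
                _ ≤ ((M:ℝ)^2)⁻¹ := hpow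
                _ ≤ ((M:ℝ)^2)⁻¹ * σq M 0 := le_mul_of_one_le_right (by positivity) hσ
            have hm : mq N (μval M j.val) (0 : Fin (N+1)) = 1 / ηq N (μval M j.val) := by
              unfold mq; rw [h0]; norm_num
            have hνnn : 0 ≤ νq M 0 j := by
              unfold νq
              have := upRate_nonneg M 0
              positivity
            calc g = mq N (μval M j.val) (0 : Fin (N+1)) * νq M 0 j := rfl
              _ = (1 / ηq N (μval M j.val)) * νq M 0 j := by rw [hm]
              _ ≤ (1 / ηq N (μval M j.val)) * ((M:ℝ)^2)⁻¹ := by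
                  exact mul_le_mul_of_nonneg_left hν (by positivity)
          have hcoef : (2 * ((M:ℝ)^2)⁻¹ + 2) * 2 ≤ 5 := by
            have h4 : (4:ℝ) ≤ (M:ℝ)^2 := by nlinarith [h2M]
            have : ((M:ℝ)^2)⁻¹ ≤ 4⁻¹ := by
              apply inv_anti₀ (by norm_num) h4
            linarith
          calc (2 * ((M:ℝ)^2)⁻¹ + 2) * 2 * g
              ≤ 5 * g := by
                apply mul_le_mul_of_nonneg_right hcoef hgnn
            _ ≤ 5 * ((1 / ηq N (μval M j.val)) * ((M:ℝ)^2)⁻¹) := by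
                apply mul_le_mul_of_nonneg_left hgle (by norm_num)
            _ = 5 / (M : ℝ) ^ 2 * (1 / ηq N (μval M j.val)) := by ring
  · -- part (b)
    rw [ge_iff_le]
    have hmem : ((⟨1, by omega⟩ : Fin (N+1)), jm) ∈
        Finset.univ.erase ((0 : Fin (N + 1)), j) := by
      rw [Finset.mem_erase]
      refine ⟨?_, Finset.mem_univ _⟩
      simp [Prod.ext_iff, Fin.ext_iff]
    exact Finset.single_le_sum (f := fun s =>
        |Aq M s.1.val j s.2 * Qq N (μval M j.val) (0 : Fin (N + 1)) s.1| * gq N M s)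
      (fun s _ => by have := gq_nonneg N M s; positivity) hmem
  · -- part (c)
    have hA : Aq M 1 j jm = 1 := by
      have hc : j.val = jm.val + 1 := by
        have : (jm : ℕ) = j.val - 1 := rfl
        omega
      have hu : upRate M 1 = 1 := by norm_num [upRate]
      unfold Aq
      rw [if_pos hc, hu]
    have hQ : Qq N (μval M j.val) (0 : Fin (N + 1)) (⟨1, by omega⟩ : Fin (N+1)) =
        μval M j.val := by
      unfold Qq
      norm_num
    have hσ1 : σq M 1 = (M:ℝ) + 1 := by
      simp [σq, upRate]
    have hjmv : (jm.val : ℕ) = j.val - 1 := rfl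
    have hμm := μval_pos M (j.val - 1)
    have hηm := ηq_pos N hμm
    have hu : upRate M 1 = 1 := by norm_num [upRate]
    rw [hA, hQ, one_mul, abs_of_pos hμj]
    show μval M ↑j * (mq N (μval M (j.val - 1)) ⟨1, by omega⟩ * νq M 1 jm) = _
    unfold mq νq
    rw [hσ1, hu]
    show μval M ↑j * ((μval M (j.val - 1))⁻¹ ^ 1 / ηq N (μval M (j.val - 1)) *
        ((1:ℝ) ^ (j.val - 1) / ((M:ℝ) + 1))) = _
    have h1 : μval M (j.val - 1) ≠ 0 := ne_of_gt hμm
    have h2 : ηq N (μval M (j.val - 1)) ≠ 0 := ne_of_gt hηm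
    have h3 : ((M:ℝ) + 1) ≠ 0 := by positivity
    field_simp
    simp


end
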